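/- Let A be a Noetherian ring, I an ideal, and M a finitely generated A-module. Then the sets Ass_A(I^n M / I^{n+1} M) and Ass_A(M / I^n M) are eventually constant in n (Brodmann's theorem), as a consequence of the stability of Ass_A X_n for X a finitely generated graded module over the Rees algebra R(I) = ⨁_{n≥0} I^n. -/

import Mathlib

set_option maxHeartbeats 2000000
set_option synthInstance.maxHeartbeats 1000000

/-! General lemmas about associated primes. -/

theorem ass_of_prime_ann {R M : Type*} [CommRing R] [AddCommGroup M] [Module R M] {p : Ideal R}
    (hp : p.IsPrime) (x : M) (hx : p = (Submodule.span R {x}).annihilator) :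
    p ∈ associatedPrimes R M := by
  have hc : p = (⊥ : Submodule R M).colon {x} := by
    rw [hx]; ext r
    rw [Submodule.mem_annihilator_span_singleton, Submodule.mem_colon_singleton, Submodule.mem_bot]
  refine ⟨hp, x, ?_⟩
  rw [← hc, hp.radical]

theorem ass_old_iff {R M : Type*} [CommRing R] [AddCommGroup M] [Module R M] [IsNoetherianRing R]
    {p : Ideal R} : p ∈ associatedPrimes R M ↔
      p.IsPrime ∧ ∃ x : M, p = (Submodule.span R {x}).annihilator := by
  constructor
  · intro h
    obtain ⟨hp, x, hx⟩ := (isAssociatedPrime_iff).mp h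
    refine ⟨hp, x, ?_⟩
    rw [hx]; ext r
    rw [Submodule.mem_annihilator_span_singleton, Submodule.mem_colon_singleton, Submodule.mem_bot]
  · rintro ⟨hp, x, hx⟩; exact ass_of_prime_ann hp x hx

section Gen
variable {A : Type*} [CommRing A] [IsNoetherianRing A] {N : Type*} [AddCommGroup N] [Module A N]

theorem mem_ass_quot_iff (D : Submodule A N) (p : Ideal A) :
    p ∈ associatedPrimes A (N ⧸ D) ↔ p.IsPrime ∧ ∃ x : N, ∀ a : A, a ∈ p ↔ a • x ∈ D := by
  rw [ass_old_iff]
  constructor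
  · rintro ⟨hp, x, hx⟩
    obtain ⟨x, rfl⟩ := Submodule.Quotient.mk_surjective D x
    refine ⟨hp, x, fun a => ?_⟩
    rw [hx, Submodule.mem_annihilator_span_singleton, ← Submodule.Quotient.mk_smul,
      Submodule.Quotient.mk_eq_zero]
  · rintro ⟨hp, x, hx⟩
    refine ⟨hp, Submodule.Quotient.mk x, ?_⟩
    ext a
    rw [Submodule.mem_annihilator_span_singleton, ← Submodule.Quotient.mk_smul,
      Submodule.Quotient.mk_eq_zero, hx]

theorem mem_ass_pair_iff (C D : Submodule A N) (p : Ideal A) :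
    p ∈ associatedPrimes A (↥C ⧸ D.comap C.subtype) ↔
      p.IsPrime ∧ ∃ x ∈ C, ∀ a : A, a ∈ p ↔ a • x ∈ D := by
  rw [mem_ass_quot_iff]
  constructor
  · rintro ⟨hp, ⟨x, hxC⟩, hx⟩
    exact ⟨hp, x, hxC, fun a => by simpa [Submodule.mem_comap] using hx a⟩
  · rintro ⟨hp, x, hxC, hx⟩
    exact ⟨hp, ⟨x, hxC⟩, fun a => by simpa [Submodule.mem_comap] using hx a⟩

/-- Ass of a module is contained in Ass of a submodule and Ass of the quotient. -/
theorem ass_subset_union (X : Submodule A N) :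
    associatedPrimes A N ⊆ associatedPrimes A X ∪ associatedPrimes A (N ⧸ X) := by
  intro p hp'
  obtain ⟨hp, x, hx⟩ := ass_old_iff.mp hp'
  by_cases h : ∀ a : A, a • x ∈ X → a • x = 0
  · right
    rw [mem_ass_quot_iff]
    refine ⟨hp, x, fun a => ?_⟩
    rw [hx, Submodule.mem_annihilator_span_singleton]
    constructor
    · intro ha; rw [ha]; exact X.zero_mem
    · intro ha; exact h a ha
  · push_neg at h
    obtain ⟨a, haX, ha0⟩ := h
    left
    refine ass_of_prime_ann hp ⟨a • x, haX⟩ ?_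
    ext b
    rw [Submodule.mem_annihilator_span_singleton]
    have : (b • (⟨a • x, haX⟩ : X) = 0) ↔ b • (a • x) = 0 := by
      rw [Subtype.ext_iff]; rfl
    rw [this, smul_smul]
    constructor
    · intro hb
      have hbx : b • x = 0 := by
        have : b ∈ (Submodule.span A {x}).annihilator := hx ▸ hb
        rwa [Submodule.mem_annihilator_span_singleton] at this
      rw [mul_comm, mul_smul, hbx, smul_zero]
    · intro hb
      have : b * a ∈ p := by
        rw [hx, Submodule.mem_annihilator_span_singleton]; exact hb
      rcases hp.mem_or_mem this with h' | h'
      · exact h'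
      · exfalso
        apply ha0
        have : a ∈ (Submodule.span A {x}).annihilator := hx ▸ h'
        rwa [Submodule.mem_annihilator_span_singleton] at this
end Gen

/-! Finiteness of `Ass_A N` for `N` finite over a Noetherian `A`-algebra `R`. -/

section FIN
variable {A R : Type*} [CommRing A] [IsNoetherianRing A] [CommRing R] [Algebra A R] [IsNoetherianRing R]

omit [IsNoetherianRing R] in
theorem ass_res_quot_prime (P : Ideal R) (hP : P.IsPrime) :
    associatedPrimes A (R ⧸ P) ⊆ {P.comap (algebraMap A R)} := by
  intro p hp
  rw [← LinearEquiv.AssociatedPrimes.eq (Submodule.Quotient.restrictScalarsEquiv A P)] at hp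
  rw [mem_ass_quot_iff] at hp
  obtain ⟨hp, x, hx⟩ := hp
  simp only [Submodule.restrictScalars_mem] at hx
  have hxP : x ∉ P := by
    intro h
    apply hp.ne_top
    rw [Ideal.eq_top_iff_one, hx]
    show (1 : A) • x ∈ P
    simpa using h
  simp only [Set.mem_singleton_iff]
  ext a
  rw [Ideal.mem_comap, hx]
  have : a • x = algebraMap A R a * x := by rw [Algebra.smul_def]
  rw [this]
  constructor
  · intro h
    rcases hP.mem_or_mem h with h' | h'
    · exact h'
    · exact absurd h' hxP
  · intro h
    exact P.mul_mem_right x h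

variable (N : Type*) [AddCommGroup N] [Module R N] [Module A N]
    [IsScalarTower A R N] [Module.Finite R N]

theorem ass_quot_finite (W₀ : Submodule R N) :
    (associatedPrimes A (N ⧸ W₀)).Finite := by
  haveI : IsNoetherian R N := inferInstance
  by_contra h0
  obtain ⟨W, hW, hmax⟩ := set_has_maximal_iff_noetherian.mpr ‹IsNoetherian R N›
      {W : Submodule R N | ¬ (associatedPrimes A (N ⧸ W)).Finite} ⟨W₀, h0⟩
  simp only [Set.mem_setOf_eq] at hW
  haveI : Nontrivial (N ⧸ W) := by
    rcases subsingleton_or_nontrivial (N ⧸ W) with h | h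
    · exact absurd (by rw [associatedPrimes.eq_empty_of_subsingleton]; exact Set.finite_empty) hW
    · exact h
  obtain ⟨P, hPm⟩ := associatedPrimes.nonempty R (N ⧸ W)
  obtain ⟨hP, xb, hxb⟩ := ass_old_iff.mp hPm
  have hxb0 : xb ≠ 0 := by
    rintro rfl
    apply hP.ne_top
    rw [hxb, Submodule.span_singleton_eq_bot.mpr rfl, Submodule.annihilator_bot]
  set W' : Submodule R N := (Submodule.span R {xb}).comap W.mkQ with hW'def
  have hWW' : W ≤ W' := by
    intro y hy
    show W.mkQ y ∈ Submodule.span R {xb}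
    rw [W.mkQ_apply, (Submodule.Quotient.mk_eq_zero W).mpr hy]
    exact Submodule.zero_mem _
  have hlt : W < W' := by
    rcases Submodule.Quotient.mk_surjective W xb with ⟨x, rfl⟩
    refine lt_of_le_of_ne hWW' fun h => hxb0 ?_
    have hx : x ∈ W' := by
      show W.mkQ x ∈ Submodule.span R {Submodule.Quotient.mk x}
      exact Submodule.mem_span_singleton_self _
    rw [← h] at hx
    exact (Submodule.Quotient.mk_eq_zero W).mpr hx
  have hfin' : (associatedPrimes A (N ⧸ W')).Finite := by
    by_contra h
    exact hmax W' h hlt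
  apply hW
  set X : Submodule A (N ⧸ W) := (Submodule.span R {xb}).restrictScalars A with hXdef
  have hsub := ass_subset_union X
  have e1 : (R ⧸ P) ≃ₗ[R] ↥(Submodule.span R {xb}) := by
    refine (Submodule.quotEquivOfEq P (LinearMap.ker (LinearMap.toSpanSingleton R _ xb)) ?_).trans
      ((LinearMap.toSpanSingleton R _ xb).quotKerEquivRange.trans
        (LinearEquiv.ofEq _ _ (LinearMap.span_singleton_eq_range R _ xb).symm))
    ext r
    rw [LinearMap.mem_ker, LinearMap.toSpanSingleton_apply, hxb,
      Submodule.mem_annihilator_span_singleton]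
  have eX : (R ⧸ P) ≃ₗ[A] ↥X :=
    (e1.trans (Submodule.restrictScalarsEquiv A R _ (Submodule.span R {xb})).symm).restrictScalars A
  have hassX : associatedPrimes A ↥X ⊆ {P.comap (algebraMap A R)} := by
    rw [← LinearEquiv.AssociatedPrimes.eq eX]
    exact ass_res_quot_prime P hP
  have e3 : ((N ⧸ W) ⧸ (Submodule.span R {xb})) ≃ₗ[R] (N ⧸ W') := by
    refine (Submodule.quotEquivOfEq _ _ ?_).trans (Submodule.quotientQuotientEquivQuotient W W' hWW')
    rw [hW'def, Submodule.map_comap_eq_of_surjective (Submodule.mkQ_surjective W)]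
  have e2 : ((N ⧸ W) ⧸ X) ≃ₗ[A] (N ⧸ W') :=
    (Submodule.Quotient.restrictScalarsEquiv A (Submodule.span R {xb})).trans
      (e3.restrictScalars A)
  have hassQ : associatedPrimes A ((N ⧸ W) ⧸ X) = associatedPrimes A (N ⧸ W') :=
    LinearEquiv.AssociatedPrimes.eq e2
  refine Set.Finite.subset (Set.Finite.union (Set.finite_singleton (P.comap (algebraMap A R))) hfin')
    (hsub.trans ?_)
  rw [hassQ]
  exact Set.union_subset_union_left _ hassX
end FIN

section Helper
variable {A R : Type*} [CommRing A] [CommRing R] [Algebra A R]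
variable {N : Type*} [AddCommGroup N] [Module R N] [Module A N] [IsScalarTower A R N]

theorem mem_ass_quot_of (W : Submodule R N) (y : N) (p : Ideal A) (hp : p.IsPrime)
    (h : ∀ a : A, a ∈ p ↔ a • y ∈ W) : p ∈ associatedPrimes A (N ⧸ W) := by
  refine ass_of_prime_ann hp (Submodule.Quotient.mk y) ?_
  ext a
  rw [Submodule.mem_annihilator_span_singleton, ← Submodule.Quotient.mk_smul,
    Submodule.Quotient.mk_eq_zero]
  exact h a
end Helper

/-! Per-prime eventual constancy via stable filtrations. -/

section PerPrime
universe u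
variable {A : Type u} [CommRing A] (I : Ideal A) {M : Type u} [AddCommGroup M] [Module A M]

/-- The filtration `E_n = {x ∈ IⁿM | p·x ⊆ Iⁿ⁺¹M}`. -/
def eFlt (p : Ideal A) : I.Filtration M where
  N n := { carrier := {x | x ∈ I ^ n • (⊤ : Submodule A M) ∧
             ∀ a ∈ p, a • x ∈ I ^ (n+1) • (⊤ : Submodule A M)}
           zero_mem' := ⟨Submodule.zero_mem _,
             fun a _ => by rw [smul_zero]; exact Submodule.zero_mem _⟩
           add_mem' := fun hx hy => ⟨Submodule.add_mem _ hx.1 hy.1,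
             fun a ha => by rw [smul_add]; exact Submodule.add_mem _ (hx.2 a ha) (hy.2 a ha)⟩
           smul_mem' := fun c x hx => ⟨Submodule.smul_mem _ c hx.1,
             fun a ha => by rw [smul_comm]; exact Submodule.smul_mem _ c (hx.2 a ha)⟩ }
  mono n := by
    rintro x ⟨h1, h2⟩
    exact ⟨Submodule.smul_mono_left (Ideal.pow_le_pow_right (by omega)) h1,
      fun a ha => Submodule.smul_mono_left (Ideal.pow_le_pow_right (by omega)) (h2 a ha)⟩
  smul_le n := by
    rintro x hx
    refine Submodule.smul_induction_on hx (fun r hr y hy => ⟨?_, fun a ha => ?_⟩)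
      (fun x y hx hy => Submodule.add_mem _ hx hy)
    · rw [pow_succ', mul_smul]
      exact Submodule.smul_mem_smul hr hy.1
    · rw [smul_comm, pow_succ' I (n+1), mul_smul]
      exact Submodule.smul_mem_smul hr (hy.2 a ha)

theorem eFlt_N (p : Ideal A) (n : ℕ) (x : M) :
    x ∈ (eFlt I p).N n ↔ x ∈ I ^ n • (⊤ : Submodule A M) ∧
      ∀ a ∈ p, a • x ∈ I ^ (n+1) • (⊤ : Submodule A M) := Iff.rfl

theorem eFlt_stable [IsNoetherianRing A] [Module.Finite A M] (p : Ideal A) :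
    (eFlt I p : I.Filtration M).Stable := by
  have h : eFlt I p ⊓ I.stableFiltration (⊤ : Submodule A M) = eFlt I p := by
    refine Ideal.Filtration.ext ?_
    rw [Ideal.Filtration.inf_N]
    funext n
    refine inf_eq_left.mpr ?_
    intro x hx
    simpa using ((eFlt_N I p n x).mp hx).1
  rw [← h]
  exact Ideal.Filtration.Stable.inter_left (F' := eFlt I p) (I.stableFiltration_stable ⊤)

/-- per-prime eventual constancy of membership in `Ass(IⁿM/Iⁿ⁺¹M)` -/
theorem per_prime [IsNoetherianRing A] [Module.Finite A M] (p : Ideal A) (hp : p.IsPrime) :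
    ∃ d : ℕ, ∀ n ≥ d,
      ((∃ x ∈ I ^ n • (⊤ : Submodule A M), ∀ a : A,
          a ∈ p ↔ a • x ∈ I ^ (n+1) • (⊤ : Submodule A M)) ↔
       (∃ x ∈ I ^ d • (⊤ : Submodule A M), ∀ a : A,
          a ∈ p ↔ a • x ∈ I ^ (d+1) • (⊤ : Submodule A M))) := by
  have hPQ : ∀ n, (∃ x ∈ I ^ n • (⊤ : Submodule A M), ∀ a : A,
      a ∈ p ↔ a • x ∈ I ^ (n+1) • (⊤ : Submodule A M)) ↔
      ¬ (∀ x ∈ (eFlt I p : I.Filtration M).N n,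
        ∃ a ∉ p, a • x ∈ I ^ (n+1) • (⊤ : Submodule A M)) := by
    intro n
    constructor
    · rintro ⟨x, hx1, hx2⟩ hq
      obtain ⟨a, hap, hax⟩ := hq x ⟨hx1, fun a ha => (hx2 a).mp ha⟩
      exact hap ((hx2 a).mpr hax)
    · intro hq
      push_neg at hq
      obtain ⟨x, hxE, hx⟩ := hq
      refine ⟨x, hxE.1, fun a => ⟨fun ha => hxE.2 a ha, fun ha => ?_⟩⟩
      by_contra hap
      exact hx a hap ha
  obtain ⟨d, hd⟩ := eFlt_stable I (M := M) p
  have hQstep : ∀ n ≥ d, (∀ x ∈ (eFlt I p : I.Filtration M).N n,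
        ∃ a ∉ p, a • x ∈ I ^ (n+1) • (⊤ : Submodule A M)) →
      (∀ x ∈ (eFlt I p : I.Filtration M).N (n+1),
        ∃ a ∉ p, a • x ∈ I ^ ((n+1)+1) • (⊤ : Submodule A M)) := by
    intro n hn hq x hx
    rw [← hd n hn] at hx
    refine Submodule.smul_induction_on hx ?_ ?_
    · intro r hr y hy
      obtain ⟨a, hap, hay⟩ := hq y hy
      refine ⟨a, hap, ?_⟩
      rw [smul_comm, pow_succ' I (n+1), mul_smul]
      exact Submodule.smul_mem_smul hr hay
    · rintro x y ⟨a, hap, hax⟩ ⟨b, hbp, hbx⟩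
      refine ⟨a * b, fun hab => (hp.mem_or_mem hab).elim hap hbp, ?_⟩
      rw [smul_add]
      refine Submodule.add_mem _ ?_ ?_
      · rw [mul_comm, mul_smul]
        exact Submodule.smul_mem _ b hax
      · rw [mul_smul]
        exact Submodule.smul_mem _ a hbx
  by_cases hall : ∀ m ≥ d, ¬ (∀ x ∈ (eFlt I p : I.Filtration M).N m,
      ∃ a ∉ p, a • x ∈ I ^ (m+1) • (⊤ : Submodule A M))
  · refine ⟨d, fun n hn => ?_⟩
    rw [hPQ, hPQ]
    exact iff_of_true (hall n hn) (hall d le_rfl)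
  · push_neg at hall
    obtain ⟨m, hm, hQm⟩ := hall
    have hQall : ∀ n ≥ m, (∀ x ∈ (eFlt I p : I.Filtration M).N n,
        ∃ a ∉ p, a • x ∈ I ^ (n+1) • (⊤ : Submodule A M)) := by
      intro n hn
      induction n, hn using Nat.le_induction with
      | base => exact hQm
      | succ n hn ih => exact hQstep n (le_trans hm hn) ih
    refine ⟨m, fun n hn => ?_⟩
    rw [hPQ, hPQ]
    exact iff_of_false (fun h => h (hQall n hn)) (fun h => h (hQall m le_rfl))
end PerPrime

/-! The Rees module, giving a finite set of candidate primes. -/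

section Rees
universe u
variable {A : Type u} [CommRing A] (I : Ideal A) (M : Type u) [AddCommGroup M] [Module A M]

/-- the shifted filtration n ↦ Iⁿ⁺¹M -/
def shiftFlt : I.Filtration M where
  N n := I ^ (n+1) • ⊤
  mono n := Submodule.smul_mono_left (Ideal.pow_le_pow_right (by omega))
  smul_le n := by
    rw [pow_succ' I (n+1), mul_smul]

noncomputable def reesM : Submodule (reesAlgebra I) (PolynomialModule A M) :=
  (I.stableFiltration (⊤ : Submodule A M)).submodule

noncomputable def reesW : Submodule (reesAlgebra I) ↥(reesM I M) :=
  ((shiftFlt I M).submodule).comap (reesM I M).subtype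

theorem reesM_fg [IsNoetherianRing A] [Module.Finite A M] : (reesM I M).FG := by
  rw [reesM, Ideal.Filtration.submodule_fg_iff_stable _ (fun i => IsNoetherian.noetherian _)]
  exact I.stableFiltration_stable ⊤

theorem rees_bound [IsNoetherianRing A] [Module.Finite A M] :
    ∃ S : Set (Ideal A), S.Finite ∧ ∀ (n : ℕ) (p : Ideal A), p.IsPrime →
      ∀ x ∈ I ^ n • (⊤ : Submodule A M),
        (∀ a : A, a ∈ p ↔ a • x ∈ I ^ (n+1) • (⊤ : Submodule A M)) → p ∈ S := by
  haveI : Module.Finite (reesAlgebra I) ↥(reesM I M) :=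
    (Module.Finite.iff_fg).mpr (reesM_fg I M)
  have hfin := ass_quot_finite (A := A) (R := ↥(reesAlgebra I)) (N := ↥(reesM I M)) (reesW I M)
  refine ⟨_, hfin, ?_⟩
  intro n p hp x hx hcolon
  have hf : (PolynomialModule.single A n x : PolynomialModule A M) ∈ reesM I M := by
    rw [reesM, Ideal.Filtration.mem_submodule]
    intro i
    rcases eq_or_ne n i with rfl | hne
    · simpa [PolynomialModule.single_apply] using hx
    · simp [PolynomialModule.single_apply, Finsupp.single_apply, if_neg hne]
  have h2 := mem_ass_quot_of (A := A) (R := ↥(reesAlgebra I)) (N := ↥(reesM I M)) (reesW I M)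
    ⟨_, hf⟩ p hp
  have hcond : ∀ a : A, a ∈ p ↔ a • (⟨_, hf⟩ : ↥(reesM I M)) ∈ reesW I M := by
    intro a
    have hsmul : (↑(a • (⟨_, hf⟩ : ↥(reesM I M))) : PolynomialModule A M)
        = PolynomialModule.single A n (a • x) := by
      rw [Submodule.coe_smul_of_tower]
      exact ((PolynomialModule.lsingle A n).map_smul a x).symm
    rw [reesW, Submodule.mem_comap, Submodule.subtype_apply, hsmul,
      Ideal.Filtration.mem_submodule]
    constructor
    · intro ha i
      rcases eq_or_ne n i with rfl | hne
      · simpa [shiftFlt, PolynomialModule.single_apply] using (hcolon a).mp ha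
      · simp [PolynomialModule.single_apply, Finsupp.single_apply, if_neg hne, Submodule.zero_mem, shiftFlt]
    · intro h
      have := h n
      simp only [shiftFlt] at this
      rw [(hcolon a)]
      simpa [PolynomialModule.single_apply] using this
  exact h2 hcond
end Rees

/-! Decreasing sequences of sets contained in a finite one stabilize. -/

theorem sets_stabilize {α : Type*} (f : ℕ → Set α) (K : ℕ) (hdec : ∀ n ≥ K, f (n+1) ⊆ f n)
    (hfin : (f K).Finite) : ∃ n₁, ∀ n ≥ n₁, f n = f n₁ := by
  have hchain : ∀ m ≥ K, ∀ n ≥ m, f n ⊆ f m := by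
    intro m hm n hn
    induction n, hn using Nat.le_induction with
    | base => exact subset_rfl
    | succ n hn ih => exact (hdec n (le_trans hm hn)).trans ih
  have hfinall : ∀ n ≥ K, (f n).Finite := fun n hn => hfin.subset (hchain K le_rfl n hn)
  set g : ℕ → ℕ := fun m => (f (K + m)).ncard with hg
  obtain ⟨m₀, hm₀⟩ : ∃ m₀, g m₀ = sInf (Set.range g) := by
    have := Nat.sInf_mem (Set.range_nonempty g)
    obtain ⟨m₀, hm₀⟩ := this
    exact ⟨m₀, hm₀⟩
  refine ⟨K + m₀, fun n hn => ?_⟩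
  have hKm : K + m₀ ≥ K := Nat.le_add_right K m₀
  have hsub : f n ⊆ f (K + m₀) := hchain (K + m₀) hKm n hn
  have hKn : K + (n - K) = n := by omega
  have hcard : (f (K + m₀)).ncard ≤ (f n).ncard := by
    calc (f (K + m₀)).ncard = g m₀ := rfl
      _ ≤ g (n - K) := by rw [hm₀]; exact Nat.sInf_le ⟨n - K, rfl⟩
      _ = (f n).ncard := by rw [hg]; dsimp only; rw [hKn]
  exact Set.eq_of_subset_of_ncard_le hsub hcard (hfinall (K + m₀) hKm)

/-- (Brodmann)  Let `A` be a Noetherian ring, `I ⊆ A` an ideal and `M` a finitely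
generated `A`-module.  Then the sets `Ass_A (IⁿM/Iⁿ⁺¹M)` and `Ass_A (M/IⁿM)` are
eventually constant in `n`. -/
theorem stmt16 (A : Type) [CommRing A] [IsNoetherianRing A] (I : Ideal A)
    (M : Type) [AddCommGroup M] [Module A M] [Module.Finite A M] :
    (∃ n₀ : ℕ, ∀ n ≥ n₀,
      associatedPrimes A
        (↥(I ^ n • (⊤ : Submodule A M)) ⧸
          Submodule.comap (I ^ n • (⊤ : Submodule A M)).subtype
            (I ^ (n + 1) • (⊤ : Submodule A M))) =
      associatedPrimes A
        (↥(I ^ n₀ • (⊤ : Submodule A M)) ⧸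
          Submodule.comap (I ^ n₀ • (⊤ : Submodule A M)).subtype
            (I ^ (n₀ + 1) • (⊤ : Submodule A M)))) ∧
    (∃ n₁ : ℕ, ∀ n ≥ n₁,
      associatedPrimes A (M ⧸ (I ^ n • (⊤ : Submodule A M))) =
      associatedPrimes A (M ⧸ (I ^ n₁ • (⊤ : Submodule A M)))) := by
  classical
  obtain ⟨S, hSfin, hSmem⟩ := rees_bound I M
  -- threshold function per prime
  have hdfun : ∀ p : Ideal A, ∃ d : ℕ, p.IsPrime → ∀ n ≥ d,
      ((∃ x ∈ I ^ n • (⊤ : Submodule A M), ∀ a : A,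
          a ∈ p ↔ a • x ∈ I ^ (n+1) • (⊤ : Submodule A M)) ↔
       (∃ x ∈ I ^ d • (⊤ : Submodule A M), ∀ a : A,
          a ∈ p ↔ a • x ∈ I ^ (d+1) • (⊤ : Submodule A M))) := by
    intro p
    by_cases hp : p.IsPrime
    · obtain ⟨d, hd⟩ := per_prime I (M := M) p hp
      exact ⟨d, fun _ => hd⟩
    · exact ⟨0, fun h => absurd h hp⟩
  choose dfun hdspec using hdfun
  set n₀ : ℕ := hSfin.toFinset.sup dfun with hn₀
  have hdle : ∀ p ∈ S, dfun p ≤ n₀ := fun p hp =>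
    Finset.le_sup (hSfin.mem_toFinset.mpr hp)
  -- part 1
  have key : ∀ n ≥ n₀,
      associatedPrimes A
        (↥(I ^ n • (⊤ : Submodule A M)) ⧸
          Submodule.comap (I ^ n • (⊤ : Submodule A M)).subtype
            (I ^ (n + 1) • (⊤ : Submodule A M))) =
      associatedPrimes A
        (↥(I ^ n₀ • (⊤ : Submodule A M)) ⧸
          Submodule.comap (I ^ n₀ • (⊤ : Submodule A M)).subtype
            (I ^ (n₀ + 1) • (⊤ : Submodule A M))) := by
    intro n hn
    ext p
    rw [mem_ass_pair_iff, mem_ass_pair_iff]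
    constructor
    · rintro ⟨hp, x, hx, hcolon⟩
      have hpS : p ∈ S := hSmem n p hp x hx hcolon
      have hle := hdle p hpS
      have h1 := hdspec p hp n (le_trans hle hn)
      have h2 := hdspec p hp n₀ hle
      exact ⟨hp, h2.mpr (h1.mp ⟨x, hx, hcolon⟩)⟩
    · rintro ⟨hp, x, hx, hcolon⟩
      have hpS : p ∈ S := hSmem n₀ p hp x hx hcolon
      have hle := hdle p hpS
      have h1 := hdspec p hp n (le_trans hle hn)
      have h2 := hdspec p hp n₀ hle
      exact ⟨hp, h1.mpr (h2.mp ⟨x, hx, hcolon⟩)⟩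
  refine ⟨⟨n₀, key⟩, ?_⟩
  -- part 2
  have hG1 : ∀ n : ℕ, ∀ p : Ideal A,
      p ∈ associatedPrimes A
        (↥(I ^ n • (⊤ : Submodule A M)) ⧸
          Submodule.comap (I ^ n • (⊤ : Submodule A M)).subtype
            (I ^ (n + 1) • (⊤ : Submodule A M))) →
      p ∈ associatedPrimes A (M ⧸ (I ^ (n+1) • (⊤ : Submodule A M))) := by
    intro n p hp
    rw [mem_ass_pair_iff] at hp
    obtain ⟨hp, x, _, hcolon⟩ := hp
    rw [mem_ass_quot_iff]
    exact ⟨hp, x, hcolon⟩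
  have hG2 : ∀ n : ℕ, ∀ p : Ideal A,
      p ∈ associatedPrimes A (M ⧸ (I ^ (n+1) • (⊤ : Submodule A M))) →
      p ∈ associatedPrimes A (M ⧸ (I ^ n • (⊤ : Submodule A M))) ∨
      p ∈ associatedPrimes A
        (↥(I ^ n • (⊤ : Submodule A M)) ⧸
          Submodule.comap (I ^ n • (⊤ : Submodule A M)).subtype
            (I ^ (n + 1) • (⊤ : Submodule A M))) := by
    intro n p hp
    rw [mem_ass_quot_iff] at hp
    obtain ⟨hp, x, hcolon⟩ := hp
    have hIle : (I ^ (n+1) • (⊤ : Submodule A M)) ≤ I ^ n • ⊤ :=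
      Submodule.smul_mono_left (Ideal.pow_le_pow_right (by omega))
    by_cases hc : ∀ b : A, b • x ∈ I ^ n • (⊤ : Submodule A M) →
        b • x ∈ I ^ (n+1) • (⊤ : Submodule A M)
    · left
      rw [mem_ass_quot_iff]
      refine ⟨hp, x, fun a => ⟨fun ha => hIle ((hcolon a).mp ha),
        fun ha => (hcolon a).mpr (hc a ha)⟩⟩
    · push_neg at hc
      obtain ⟨b, hb1, hb2⟩ := hc
      have hbp : b ∉ p := fun h => hb2 ((hcolon b).mp h)
      right
      rw [mem_ass_pair_iff]
      refine ⟨hp, b • x, hb1, fun a => ?_⟩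
      constructor
      · intro ha
        rw [smul_comm]
        have : a • x ∈ I ^ (n+1) • (⊤ : Submodule A M) := (hcolon a).mp ha
        exact Submodule.smul_mem _ b this
      · intro ha
        rw [smul_smul] at ha
        have : a * b ∈ p := (hcolon (a * b)).mpr ha
        rcases hp.mem_or_mem this with h' | h'
        · exact h'
        · exact absurd h' hbp
  -- An is decreasing from n₀ + 1
  have hdec : ∀ n ≥ n₀ + 1,
      associatedPrimes A (M ⧸ (I ^ (n+1) • (⊤ : Submodule A M))) ⊆
      associatedPrimes A (M ⧸ (I ^ n • (⊤ : Submodule A M))) := by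
    intro n hn p hp
    rcases hG2 n p hp with h | h
    · exact h
    · obtain ⟨m, rfl⟩ : ∃ m, n = m + 1 := ⟨n - 1, by omega⟩
      have hm : m ≥ n₀ := by omega
      have : p ∈ associatedPrimes A
        (↥(I ^ m • (⊤ : Submodule A M)) ⧸
          Submodule.comap (I ^ m • (⊤ : Submodule A M)).subtype
            (I ^ (m + 1) • (⊤ : Submodule A M))) := by
        rw [key m hm, ← key (m+1) (by omega)]
        exact h
      exact hG1 m p this
  have hfinA : (associatedPrimes A (M ⧸ (I ^ (n₀+1) • (⊤ : Submodule A M)))).Finite :=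
    ass_quot_finite (A := A) (R := A) (N := M) (I ^ (n₀+1) • (⊤ : Submodule A M))
  obtain ⟨n₁, hn₁⟩ := sets_stabilize
    (fun n => associatedPrimes A (M ⧸ (I ^ n • (⊤ : Submodule A M)))) (n₀ + 1)
    hdec hfinA
  exact ⟨n₁, hn₁⟩
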